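/- Let G be a finitely generated torsion-free group with a free abelian normal subgroup A of finite index. Then every element of G is generalized torsion if and only if the center of G is trivial. -/

import Mathlib

/-- `g` is a generalized torsion element of `G`: some nonempty finite product of
conjugates of `g` equals the identity. -/
def IsGenTorsion {G : Type*} [Group G] (g : G) : Prop :=
  ∃ xs : List G, xs ≠ [] ∧ (xs.map (fun x => x⁻¹ * g * x)).prod = 1

theorem genTorsion_all_iff_center_trivial {G : Type*} [Group G] [Group.FG G]
    (A : Subgroup G) [A.Normal] (hfin : A.index ≠ 0)
    (hfree : ∃ n : ℕ, Nonempty (A ≃* Multiplicative (Fin n → ℤ)))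
    (htf : ∀ g : G, IsOfFinOrder g → g = 1) :
    (∀ g : G, IsGenTorsion g) ↔ Subgroup.center G = ⊥ := by
  obtain ⟨nA, ⟨e⟩⟩ := hfree
  have hAcomm : ∀ x y : G, x ∈ A → y ∈ A → x * y = y * x := by
    intro x y hx hy
    have h : (⟨x, hx⟩ : A) * ⟨y, hy⟩ = ⟨y, hy⟩ * ⟨x, hx⟩ :=
      e.injective (by rw [map_mul, map_mul, mul_comm])
    exact Subtype.ext_iff.mp h
  constructor
  · -- all gen torsion → center trivial
    intro hall
    rw [eq_bot_iff]
    intro z hz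
    simp only [Subgroup.mem_bot]
    obtain ⟨xs, hne, hprod⟩ := hall z
    have hconj : ∀ x : G, x⁻¹ * z * x = z := by
      intro x
      have h := (Subgroup.mem_center_iff.mp hz) x
      rw [mul_assoc, ← h]
      group
    have : xs.map (fun x => x⁻¹ * z * x) = List.replicate xs.length z := by
      rw [List.eq_replicate_iff]
      refine ⟨by simp, ?_⟩
      intro b hb
      obtain ⟨x, _, hx⟩ := List.mem_map.mp hb
      rw [← hx, hconj]
    rw [this, List.prod_replicate] at hprod
    refine htf z (isOfFinOrder_iff_pow_eq_one.mpr ⟨xs.length, ?_, hprod⟩)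
    exact List.length_pos_iff.mpr hne
  · -- center trivial → all gen torsion
    intro hcen g
    haveI : A.FiniteIndex := ⟨hfin⟩
    haveI : Fintype (G ⧸ A) := A.fintypeQuotientOfFiniteIndex
    set n := A.index with hn
    have hga : g ^ n ∈ A := A.pow_index_mem g
    set l : List (G ⧸ A) := Finset.univ.toList with hl
    set f : (G ⧸ A) → G := fun q => (Quotient.out q)⁻¹ * g ^ n * Quotient.out q with hf
    have hfA : ∀ q, f q ∈ A := fun q => by
      simpa [hf, mul_assoc] using Subgroup.Normal.conj_mem' ‹A.Normal› _ hga (Quotient.out q)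
    -- f depends only on the coset of the conjugator
    have key : ∀ x : G, x⁻¹ * g ^ n * x = f (QuotientGroup.mk x) := by
      intro x
      set q : G ⧸ A := QuotientGroup.mk x with hq
      have hout : QuotientGroup.mk (Quotient.out q) = q := QuotientGroup.out_eq' q
      set y : G := Quotient.out q with hy
      have hk : y⁻¹ * x ∈ A := by
        rw [← QuotientGroup.eq, hout, hq]
      have hyA : y⁻¹ * g ^ n * y ∈ A := by
        simpa [mul_assoc] using Subgroup.Normal.conj_mem' ‹A.Normal› _ hga y
      have hx : x = y * (y⁻¹ * x) := by group
      calc x⁻¹ * g ^ n * x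
          = (y⁻¹ * x)⁻¹ * (y⁻¹ * g ^ n * y) * (y⁻¹ * x) := by rw [hx]; group
        _ = (y⁻¹ * x)⁻¹ * ((y⁻¹ * g ^ n * y) * (y⁻¹ * x)) := by rw [mul_assoc]
        _ = (y⁻¹ * x)⁻¹ * ((y⁻¹ * x) * (y⁻¹ * g ^ n * y)) := by
            rw [hAcomm _ _ hyA hk]
        _ = f q := by rw [hf]; group; rw [hy]
    set z : G := (l.map f).prod with hz
    -- z is central
    have hzc : z ∈ Subgroup.center G := by
      rw [Subgroup.mem_center_iff]
      intro h
      have hinv : h⁻¹ * z * h = z := by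
        set φ : G →* G := (MulAut.conj h⁻¹).toMonoidHom with hφ
        have hφx : ∀ x, φ x = h⁻¹ * x * h := by intro x; simp [hφ, mul_assoc]
        have h1 : h⁻¹ * z * h = (l.map (φ ∘ f)).prod := by
          rw [← hφx, hz, map_list_prod φ, List.map_map]
        have h2 : ∀ q : G ⧸ A, (φ ∘ f) q = f (q * QuotientGroup.mk h) := by
          intro q
          have e1 : (φ ∘ f) q = (Quotient.out q * h)⁻¹ * g ^ n * (Quotient.out q * h) := by
            simp only [Function.comp, hφx, hf]
            group
          have e2 : (QuotientGroup.mk (Quotient.out q * h) : G ⧸ A)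
              = q * QuotientGroup.mk h := by
            rw [QuotientGroup.mk_mul, QuotientGroup.out_eq']
          rw [e1, key, e2]
        have h3 : l.map (φ ∘ f) = (l.map (fun q => q * QuotientGroup.mk h)).map f := by
          rw [List.map_map]
          exact List.map_congr_left (fun q _ => h2 q)
        have hperm : List.Perm (l.map (fun q => q * QuotientGroup.mk h)) l := by
          refine (List.perm_ext_iff_of_nodup ?_ (Finset.nodup_toList _)).mpr ?_
          · exact (Finset.nodup_toList _).map (mul_left_injective _)
          · intro a
            simp only [List.mem_map, hl, Finset.mem_toList, Finset.mem_univ, true_and,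
              iff_true]
            exact ⟨a * (QuotientGroup.mk h)⁻¹, by group⟩
        have hpair : ((l.map (fun q => q * QuotientGroup.mk h)).map f).Pairwise Commute := by
          refine List.pairwise_of_forall_mem_list ?_
          intro a ha b hb
          obtain ⟨qa, _, hqa⟩ := List.mem_map.mp ha
          obtain ⟨qb, _, hqb⟩ := List.mem_map.mp hb
          exact hAcomm a b (hqa ▸ hfA qa) (hqb ▸ hfA qb)
        rw [h1, h3, (hperm.map f).prod_eq' hpair, ← hz]
      calc h * z = h * (h⁻¹ * z * h) := by rw [hinv]
        _ = z * h := by group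
    have hz1 : z = 1 := by
      rw [hcen] at hzc
      exact Subgroup.mem_bot.mp hzc
    -- build the witness list
    refine ⟨(l.map (fun q => List.replicate n (Quotient.out q))).flatten, ?_, ?_⟩
    · have hmem : (QuotientGroup.mk (1 : G) : G ⧸ A) ∈ l := by
        simp [hl]
      refine List.ne_nil_of_mem (a := Quotient.out (QuotientGroup.mk (1 : G) : G ⧸ A)) ?_
      rw [List.mem_flatten]
      exact ⟨List.replicate n (Quotient.out (QuotientGroup.mk (1 : G) : G ⧸ A)),
        List.mem_map_of_mem hmem, List.mem_replicate.mpr ⟨hfin, rfl⟩⟩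
    · rw [List.map_flatten, List.map_map, List.prod_flatten, List.map_map]
      have hmapeq : ∀ (F : (G ⧸ A) → G), (∀ q ∈ l, F q = f q) → (l.map F).prod = 1 := by
        intro F hF
        rw [List.map_congr_left hF, ← hz, hz1]
      apply hmapeq
      intro q _
      simp only [Function.comp, List.map_replicate, List.prod_replicate, hf]
      rw [show ((Quotient.out q)⁻¹ * g * Quotient.out q)
          = ((Quotient.out q)⁻¹ * g * ((Quotient.out q)⁻¹)⁻¹) by rw [inv_inv],
        conj_pow, inv_inv]
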